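/- Let 0 < α < δ < 1/2. Then, as x₀ → +∞, ∫_{−∞}^{x₀^α} ∫_{|x'| < ε (x₀−t)^{1/2}} exp( −½ x'·Q x' + E(x', x₀ − t) ) · ν( t, x'/(x₀−t)^{1/2} ) · ( (1 − t/x₀)^{−(d−1)/2} − 1 ) dx' dt = o(x₀^{δ − 1/2}). -/

import Mathlib

open Metric MeasureTheory Filter Asymptotics
open scoped Topology

lemma aux_one_sub_rpow {p x : ℝ} (hx0 : 0 < x) (hx1 : x ≤ 1) :
    1 - x ^ p ≤ max 1 p * (1 - x) := by
  rcases le_total p 1 with hp | hp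
  · have h1 : x ^ (1:ℝ) ≤ x ^ p := Real.rpow_le_rpow_of_exponent_ge hx0 hx1 hp
    rw [Real.rpow_one] at h1
    have h2 : (1:ℝ) ≤ max 1 p := le_max_left _ _
    nlinarith
  · have hb := one_add_mul_self_le_rpow_one_add (s := x - 1) (by linarith) hp
    rw [show (1:ℝ) + (x-1) = x by ring] at hb
    have h2 : p ≤ max 1 p := le_max_right _ _
    nlinarith

lemma aux_rpow_sub_one {p s : ℝ} (hp : 0 ≤ p) (hs : s ≤ 1/2) :
    |(1 - s) ^ (-p) - 1| ≤ (2 ^ (p+1) * max 1 p) * |s| := by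
  have hc1 : (1:ℝ) ≤ max 1 p := le_max_left _ _
  have h2p : (1:ℝ) ≤ (2:ℝ) ^ (p+1) := Real.one_le_rpow one_le_two (by linarith)
  rcases le_total s 0 with hs0 | hs0
  · have hb1 : (1:ℝ) ≤ 1 - s := by linarith
    have hx0 : 0 < (1 - s)⁻¹ := by positivity
    have hx1 : (1 - s)⁻¹ ≤ 1 := by
      rw [inv_le_one_iff₀]; right; exact hb1
    have hrw : (1 - s) ^ (-p) = ((1 - s)⁻¹) ^ p := by
      rw [Real.rpow_neg (by linarith), ← Real.inv_rpow (by linarith)]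
    have hv1 : ((1 - s)⁻¹) ^ p ≤ 1 := Real.rpow_le_one (le_of_lt hx0) hx1 hp
    have hkey := aux_one_sub_rpow (p := p) hx0 hx1
    have h1x : 1 - (1 - s)⁻¹ ≤ -s := by
      have he : 1 - (1 - s)⁻¹ = (-s) * (1 - s)⁻¹ := by
        field_simp; ring
      rw [he]
      have := mul_le_mul_of_nonneg_left hx1 (neg_nonneg.2 hs0)
      linarith
    rw [hrw, abs_sub_comm, abs_of_nonneg (by linarith), abs_of_nonpos hs0]
    calc 1 - ((1-s)⁻¹) ^ p ≤ max 1 p * (1 - (1-s)⁻¹) := hkey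
      _ ≤ max 1 p * (-s) := by
          exact mul_le_mul_of_nonneg_left h1x (by linarith)
      _ ≤ 2 ^ (p+1) * max 1 p * (-s) := by
          nlinarith [mul_nonneg (by linarith : (0:ℝ) ≤ max 1 p) (neg_nonneg.2 hs0)]
  · have hb0 : (0:ℝ) < 1 - s := by linarith
    have hb1 : 1 - s ≤ 1 := by linarith
    set y := (1 - s) ^ p with hy
    have hy0 : 0 < y := Real.rpow_pos_of_pos hb0 p
    have hy1 : y ≤ 1 := Real.rpow_le_one (le_of_lt hb0) hb1 hp
    have hrw : (1 - s) ^ (-p) = y⁻¹ := by rw [Real.rpow_neg (le_of_lt hb0)]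
    have hyinv : y⁻¹ ≤ 2 ^ p := by
      rw [inv_le_comm₀ hy0 (Real.rpow_pos_of_pos two_pos p)]
      rw [← Real.rpow_neg (by norm_num)]
      calc (2:ℝ)^(-p) = ((1:ℝ)/2) ^ p := by
            rw [Real.rpow_neg (by norm_num), ← Real.inv_rpow (by norm_num)]; norm_num
        _ ≤ y := Real.rpow_le_rpow (by norm_num) (by linarith) hp
    have hkey := aux_one_sub_rpow (p := p) hb0 hb1
    rw [show (1:ℝ) - (1 - s) = s by ring] at hkey
    have hw1 : 1 ≤ y⁻¹ := by rw [le_inv_comm₀ one_pos hy0]; simpa using hy1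
    rw [hrw, abs_of_nonneg (by linarith), abs_of_nonneg hs0]
    have heq : y⁻¹ - 1 = y⁻¹ * (1 - y) := by field_simp
    rw [heq]
    calc y⁻¹ * (1 - y) ≤ 2 ^ p * (max 1 p * s) := by
          apply mul_le_mul hyinv hkey (by linarith) (by positivity)
      _ ≤ 2 ^ (p+1) * max 1 p * s := by
          rw [Real.rpow_add two_pos, Real.rpow_one]
          nlinarith [Real.rpow_pos_of_pos two_pos p,
            mul_nonneg (le_of_lt (Real.rpow_pos_of_pos two_pos p))
              (mul_nonneg (by linarith : (0:ℝ) ≤ max 1 p) hs0)]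

lemma aux_littleO {δ : ℝ} (hδ : -1 < δ) :
    (fun x : ℝ => x ^ (-1:ℝ)) =o[atTop] fun x : ℝ => x ^ δ := by
  rw [isLittleO_iff_tendsto']
  · have h := tendsto_rpow_neg_atTop (y := δ + 1) (by linarith)
    apply h.congr'
    filter_upwards [eventually_gt_atTop 0] with x hx
    rw [show -(δ+1) = -1 - δ by ring, Real.rpow_sub hx]
  · filter_upwards [eventually_gt_atTop 0] with x hx h0
    exact absurd h0 (ne_of_gt (Real.rpow_pos_of_pos hx δ))

lemma aux_gauss (n : ℕ) {b : ℝ} (hb : 0 < b) :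
    Integrable (fun v : EuclideanSpace ℝ (Fin n) => Real.exp (-b * ‖v‖^2)) := by
  have h := GaussianFourier.integrable_cexp_neg_mul_sq_norm_add
    (V := EuclideanSpace ℝ (Fin n)) (b := (b:ℂ)) (by simpa using hb) 0 0
  apply h.norm.congr
  filter_upwards with v
  simp [Complex.norm_exp, ← Complex.ofReal_pow]

/-- for `0 < α < δ < 1/2`,
`∫_{-∞}^{x₀^α} ∫_{|x'|<ε√(x₀-t)} exp(-½x'·Qx' + E(x',x₀-t)) ν(t,x'/√(x₀-t))
   ((1-t/x₀)^{-(d-1)/2} - 1) dx' dt = o(x₀^{δ-1/2})` as `x₀ → +∞`. -/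
theorem stmt_15 (d : ℕ) (hd : 2 ≤ d) (ε γ : ℝ) (hε : 0 < ε) (hγ : 0 < γ)
    (Q : Matrix (Fin (d - 1)) (Fin (d - 1)) ℝ) (hQsymm : Q.IsSymm) (hQpos : Q.PosDef)
    (hgamQ : ∀ v : EuclideanSpace ℝ (Fin (d - 1)),
      γ * ‖v‖ ^ 2 ≤ ∑ p, ∑ q, Q p q * v p * v q)
    (ν : ℝ × EuclideanSpace ℝ (Fin (d - 1)) → ℂ)
    (hν : ContinuousOn ν {q : ℝ × EuclideanSpace ℝ (Fin (d - 1)) | ‖q.2‖ ≤ ε})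
    (hνdecay : ∀ N : ℝ, 0 < N → ∃ C : ℝ, ∀ (t : ℝ) (ξ : EuclideanSpace ℝ (Fin (d - 1))),
      ‖ξ‖ ≤ ε → ‖ν (t, ξ)‖ ≤ C * (1 + |t|) ^ (-N))
    (Efun : EuclideanSpace ℝ (Fin (d - 1)) → ℝ → ℂ)
    (hE : ∀ τ : ℝ, 0 < τ → ∀ x' : EuclideanSpace ℝ (Fin (d - 1)),
      ‖x'‖ < ε * Real.sqrt τ →
      -(1 / 2) * (∑ p, ∑ q, Q p q * x' p * x' q) + (Efun x' τ).re ≤ -(γ / 4) * ‖x'‖ ^ 2)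
    (α δ : ℝ) (hα0 : 0 < α) (hαδ : α < δ) (hδ : δ < 1 / 2) :
    (fun x₀ : ℝ =>
      ∫ t in Set.Iic (x₀ ^ α),
        ∫ x' in ball (0 : EuclideanSpace ℝ (Fin (d - 1))) (ε * Real.sqrt (x₀ - t)),
          Complex.exp (-(1 / 2 : ℂ) * (∑ p, ∑ q, (Q p q : ℂ) * x' p * x' q) +
              Efun x' (x₀ - t)) *
            ν (t, (Real.sqrt (x₀ - t))⁻¹ • x') *
            (((1 - t / x₀) ^ (-((d : ℝ) - 1) / 2) - 1 : ℝ) : ℂ))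
      =o[atTop] fun x₀ : ℝ => x₀ ^ (δ - 1 / 2) := by
  obtain ⟨C, hC⟩ := hνdecay 3 (by norm_num)
  set p : ℝ := ((d:ℝ) - 1) / 2 with hpdef
  have hd2 : (2:ℝ) ≤ (d:ℝ) := by exact_mod_cast hd
  have hp0 : 0 ≤ p := by rw [hpdef]; linarith
  set K : ℝ := 2 ^ (p+1) * max 1 p with hKdef
  have hK0 : 0 ≤ K := by
    have := Real.rpow_pos_of_pos (two_pos (α := ℝ)) (p+1)
    have h1 : (1:ℝ) ≤ max 1 p := le_max_left _ _
    nlinarith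
  set C' : ℝ := |C| with hC'def
  have hC'0 : 0 ≤ C' := abs_nonneg _
  have hgauss := aux_gauss (d-1) (b := γ/4) (by positivity)
  set G : ℝ := ∫ v : EuclideanSpace ℝ (Fin (d-1)), Real.exp (-(γ/4) * ‖v‖^2) with hGdef
  have hG0 : 0 ≤ G := integral_nonneg fun v => (Real.exp_pos _).le
  have hI2' : Integrable (fun t : ℝ => (1 + |t|) ^ (-(2:ℝ))) := by
    have : ((Module.finrank ℝ ℝ : ℝ)) < 2 := by simp
    simpa [Real.norm_eq_abs] using integrable_one_add_norm (E := ℝ) (μ := volume) this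
  set I2 : ℝ := ∫ t : ℝ, (1 + |t|) ^ (-(2:ℝ)) with hI2def
  have hbigO : (fun x₀ : ℝ =>
      ∫ t in Set.Iic (x₀ ^ α),
        ∫ x' in ball (0 : EuclideanSpace ℝ (Fin (d - 1))) (ε * Real.sqrt (x₀ - t)),
          Complex.exp (-(1 / 2 : ℂ) * (∑ p, ∑ q, (Q p q : ℂ) * x' p * x' q) +
              Efun x' (x₀ - t)) *
            ν (t, (Real.sqrt (x₀ - t))⁻¹ • x') *
            (((1 - t / x₀) ^ (-((d : ℝ) - 1) / 2) - 1 : ℝ) : ℂ))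
      =O[atTop] fun x₀ : ℝ => x₀ ^ (-1:ℝ) := by
    rw [isBigO_iff]
    refine ⟨C' * K * G * I2, ?_⟩
    have hev : ∀ᶠ x₀ : ℝ in atTop, x₀ ^ (α - 1) < 1/2 := by
      have h := tendsto_rpow_neg_atTop (y := 1 - α) (by linarith : (0:ℝ) < 1 - α)
      have h2 := h.eventually_lt_const (by norm_num : (0:ℝ) < 1/2)
      filter_upwards [h2] with x hx
      rwa [show α - 1 = -(1-α) by ring]
    filter_upwards [hev, eventually_ge_atTop 1] with x₀ h12 hx1
    have hx0 : (0:ℝ) < x₀ := by linarith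
    have hxa : x₀ ^ α ≤ x₀ / 2 := by
      have he : x₀ ^ (α - 1) = x₀ ^ α / x₀ := by
        rw [Real.rpow_sub hx0, Real.rpow_one]
      rw [he, div_lt_iff₀ hx0] at h12
      linarith
    set B : ℝ := C' * K / x₀ * G with hBdef
    have hB0 : 0 ≤ B := by
      apply mul_nonneg _ hG0
      apply div_nonneg (mul_nonneg hC'0 hK0) hx0.le
    have hinner : ∀ t ∈ Set.Iic (x₀ ^ α),
        ‖∫ x' in ball (0 : EuclideanSpace ℝ (Fin (d - 1))) (ε * Real.sqrt (x₀ - t)),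
          Complex.exp (-(1 / 2 : ℂ) * (∑ p, ∑ q, (Q p q : ℂ) * x' p * x' q) +
              Efun x' (x₀ - t)) *
            ν (t, (Real.sqrt (x₀ - t))⁻¹ • x') *
            (((1 - t / x₀) ^ (-((d : ℝ) - 1) / 2) - 1 : ℝ) : ℂ)‖
          ≤ B * (1 + |t|) ^ (-(2:ℝ)) := by
      intro t ht
      rw [Set.mem_Iic] at ht
      have htx : t ≤ x₀ / 2 := ht.trans hxa
      have hτpos : 0 < x₀ - t := by linarith
      have hsqpos : 0 < Real.sqrt (x₀ - t) := Real.sqrt_pos.2 hτpos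
      set bnd : ℝ := C' * K / x₀ * (1 + |t|) ^ (-(2:ℝ)) with hbnddef
      have hbnd0 : 0 ≤ bnd := by
        apply mul_nonneg (div_nonneg (mul_nonneg hC'0 hK0) hx0.le)
        positivity
      have hpt : ∀ x' ∈ ball (0 : EuclideanSpace ℝ (Fin (d - 1))) (ε * Real.sqrt (x₀ - t)),
          ‖Complex.exp (-(1 / 2 : ℂ) * (∑ p, ∑ q, (Q p q : ℂ) * x' p * x' q) +
              Efun x' (x₀ - t)) *
            ν (t, (Real.sqrt (x₀ - t))⁻¹ • x') *
            (((1 - t / x₀) ^ (-((d : ℝ) - 1) / 2) - 1 : ℝ) : ℂ)‖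
            ≤ bnd * Real.exp (-(γ/4) * ‖x'‖^2) := by
        intro x' hx'
        rw [mem_ball_zero_iff] at hx'
        -- real part bound
        have hS : (∑ i, ∑ j, (Q i j : ℂ) * (x' i : ℂ) * (x' j : ℂ))
            = ((∑ i, ∑ j, Q i j * x' i * x' j : ℝ) : ℂ) := by
          push_cast; rfl
        have hcast : -(1 / 2 : ℂ) * (∑ i, ∑ j, (Q i j : ℂ) * (x' i : ℂ) * (x' j : ℂ))
            = ((-(1/2) * (∑ i, ∑ j, Q i j * x' i * x' j) : ℝ) : ℂ) := by
          rw [hS]; push_cast; ring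
        have hzre : (-(1 / 2 : ℂ) * (∑ i, ∑ j, (Q i j : ℂ) * (x' i : ℂ) * (x' j : ℂ)) +
              Efun x' (x₀ - t)).re
            = -(1/2) * (∑ i, ∑ j, Q i j * x' i * x' j) + (Efun x' (x₀ - t)).re := by
          rw [hcast, Complex.add_re, Complex.ofReal_re]
        have hre : (-(1 / 2 : ℂ) * (∑ i, ∑ j, (Q i j : ℂ) * (x' i : ℂ) * (x' j : ℂ)) +
              Efun x' (x₀ - t)).re ≤ -(γ/4) * ‖x'‖^2 := by
          rw [hzre]
          have := hE (x₀ - t) hτpos x' hx'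
          linarith
        -- ν bound
        have hξ : ‖(Real.sqrt (x₀ - t))⁻¹ • x'‖ ≤ ε := by
          rw [norm_smul, norm_inv, Real.norm_eq_abs, abs_of_pos hsqpos]
          rw [inv_mul_le_iff₀ hsqpos, mul_comm]
          exact hx'.le
        have hν1 : ‖ν (t, (Real.sqrt (x₀ - t))⁻¹ • x')‖ ≤ C' * (1 + |t|) ^ (-(3:ℝ)) := by
          refine (hC t _ hξ).trans ?_
          apply mul_le_mul_of_nonneg_right (le_abs_self C)
          positivity
        -- rpow factor bound
        have hs12 : t / x₀ ≤ 1/2 := by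
          rw [div_le_iff₀ hx0]; linarith
        have hr : |(1 - t / x₀) ^ (-((d : ℝ) - 1) / 2) - 1| ≤ K * (|t| / x₀) := by
          have := aux_rpow_sub_one (p := p) (s := t / x₀) hp0 hs12
          rw [show -((d : ℝ) - 1) / 2 = -p by rw [hpdef]; ring]
          rw [abs_div, abs_of_pos hx0] at this
          exact this
        -- assemble
        have hnorm : ‖Complex.exp (-(1 / 2 : ℂ) * (∑ i, ∑ j, (Q i j : ℂ) * x' i * x' j) +
              Efun x' (x₀ - t)) *
            ν (t, (Real.sqrt (x₀ - t))⁻¹ • x') *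
            (((1 - t / x₀) ^ (-((d : ℝ) - 1) / 2) - 1 : ℝ) : ℂ)‖
            = Real.exp ((-(1 / 2 : ℂ) * (∑ i, ∑ j, (Q i j : ℂ) * x' i * x' j) +
              Efun x' (x₀ - t)).re) *
              ‖ν (t, (Real.sqrt (x₀ - t))⁻¹ • x')‖ *
              |(1 - t / x₀) ^ (-((d : ℝ) - 1) / 2) - 1| := by
          rw [norm_mul, norm_mul, Complex.norm_exp,
            Complex.norm_real, Real.norm_eq_abs]
        rw [hnorm]
        have hmain : Real.exp ((-(1 / 2 : ℂ) * (∑ i, ∑ j, (Q i j : ℂ) * x' i * x' j) +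
              Efun x' (x₀ - t)).re) *
              ‖ν (t, (Real.sqrt (x₀ - t))⁻¹ • x')‖ *
              |(1 - t / x₀) ^ (-((d : ℝ) - 1) / 2) - 1|
            ≤ Real.exp (-(γ/4) * ‖x'‖^2) * (C' * (1 + |t|) ^ (-(3:ℝ))) * (K * (|t| / x₀)) := by
          have e1 := Real.exp_le_exp.2 hre
          apply mul_le_mul _ hr (abs_nonneg _)
          · positivity
          · exact mul_le_mul e1 hν1 (norm_nonneg _) (Real.exp_nonneg _)
        refine hmain.trans ?_
        have habs : (1 + |t|) ^ (-(3:ℝ)) * |t| ≤ (1 + |t|) ^ (-(2:ℝ)) := by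
          have h1 : (0:ℝ) < 1 + |t| := by positivity
          calc (1 + |t|) ^ (-(3:ℝ)) * |t| ≤ (1 + |t|) ^ (-(3:ℝ)) * (1 + |t|) := by
                apply mul_le_mul_of_nonneg_left (by linarith [abs_nonneg t])
                positivity
            _ = (1 + |t|) ^ (-(2:ℝ)) := by
                rw [← Real.rpow_add_one (ne_of_gt h1)]; norm_num
        calc Real.exp (-(γ/4) * ‖x'‖^2) * (C' * (1 + |t|) ^ (-(3:ℝ))) * (K * (|t| / x₀))
            = (C' * K / x₀) * ((1 + |t|) ^ (-(3:ℝ)) * |t|) * Real.exp (-(γ/4) * ‖x'‖^2) := by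
              ring
          _ ≤ (C' * K / x₀) * (1 + |t|) ^ (-(2:ℝ)) * Real.exp (-(γ/4) * ‖x'‖^2) := by
              apply mul_le_mul_of_nonneg_right _ (Real.exp_nonneg _)
              apply mul_le_mul_of_nonneg_left habs
              exact div_nonneg (mul_nonneg hC'0 hK0) hx0.le
          _ = bnd * Real.exp (-(γ/4) * ‖x'‖^2) := by rw [hbnddef]
      calc ‖∫ x' in ball (0 : EuclideanSpace ℝ (Fin (d - 1))) (ε * Real.sqrt (x₀ - t)),
            Complex.exp (-(1 / 2 : ℂ) * (∑ p, ∑ q, (Q p q : ℂ) * x' p * x' q) +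
              Efun x' (x₀ - t)) *
            ν (t, (Real.sqrt (x₀ - t))⁻¹ • x') *
            (((1 - t / x₀) ^ (-((d : ℝ) - 1) / 2) - 1 : ℝ) : ℂ)‖
          ≤ ∫ x' in ball (0 : EuclideanSpace ℝ (Fin (d - 1))) (ε * Real.sqrt (x₀ - t)),
            ‖Complex.exp (-(1 / 2 : ℂ) * (∑ p, ∑ q, (Q p q : ℂ) * x' p * x' q) +
              Efun x' (x₀ - t)) *
            ν (t, (Real.sqrt (x₀ - t))⁻¹ • x') *
            (((1 - t / x₀) ^ (-((d : ℝ) - 1) / 2) - 1 : ℝ) : ℂ)‖ :=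
            norm_integral_le_integral_norm _
        _ ≤ ∫ x' in ball (0 : EuclideanSpace ℝ (Fin (d - 1))) (ε * Real.sqrt (x₀ - t)),
            bnd * Real.exp (-(γ/4) * ‖x'‖^2) := by
            apply integral_mono_of_nonneg
            · filter_upwards with x'; exact norm_nonneg _
            · exact (hgauss.const_mul bnd).restrict
            · filter_upwards [ae_restrict_mem measurableSet_ball] with x' hx'
              exact hpt x' hx'
        _ = bnd * ∫ x' in ball (0 : EuclideanSpace ℝ (Fin (d - 1))) (ε * Real.sqrt (x₀ - t)),
            Real.exp (-(γ/4) * ‖x'‖^2) := integral_const_mul _ _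
        _ ≤ bnd * G := by
            apply mul_le_mul_of_nonneg_left _ hbnd0
            exact setIntegral_le_integral hgauss
              (by filter_upwards with v; positivity)
        _ = B * (1 + |t|) ^ (-(2:ℝ)) := by rw [hBdef, hbnddef]; ring
    have houter : ‖∫ t in Set.Iic (x₀ ^ α),
        ∫ x' in ball (0 : EuclideanSpace ℝ (Fin (d - 1))) (ε * Real.sqrt (x₀ - t)),
          Complex.exp (-(1 / 2 : ℂ) * (∑ p, ∑ q, (Q p q : ℂ) * x' p * x' q) +
              Efun x' (x₀ - t)) *
            ν (t, (Real.sqrt (x₀ - t))⁻¹ • x') *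
            (((1 - t / x₀) ^ (-((d : ℝ) - 1) / 2) - 1 : ℝ) : ℂ)‖ ≤ B * I2 := by
      calc ‖∫ t in Set.Iic (x₀ ^ α),
          ∫ x' in ball (0 : EuclideanSpace ℝ (Fin (d - 1))) (ε * Real.sqrt (x₀ - t)),
            Complex.exp (-(1 / 2 : ℂ) * (∑ p, ∑ q, (Q p q : ℂ) * x' p * x' q) +
              Efun x' (x₀ - t)) *
            ν (t, (Real.sqrt (x₀ - t))⁻¹ • x') *
            (((1 - t / x₀) ^ (-((d : ℝ) - 1) / 2) - 1 : ℝ) : ℂ)‖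
          ≤ ∫ t in Set.Iic (x₀ ^ α),
            ‖∫ x' in ball (0 : EuclideanSpace ℝ (Fin (d - 1))) (ε * Real.sqrt (x₀ - t)),
            Complex.exp (-(1 / 2 : ℂ) * (∑ p, ∑ q, (Q p q : ℂ) * x' p * x' q) +
              Efun x' (x₀ - t)) *
            ν (t, (Real.sqrt (x₀ - t))⁻¹ • x') *
            (((1 - t / x₀) ^ (-((d : ℝ) - 1) / 2) - 1 : ℝ) : ℂ)‖ :=
            norm_integral_le_integral_norm _
        _ ≤ ∫ t in Set.Iic (x₀ ^ α), B * (1 + |t|) ^ (-(2:ℝ)) := by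
            apply integral_mono_of_nonneg
            · filter_upwards with t; exact norm_nonneg _
            · exact (hI2'.const_mul B).restrict
            · filter_upwards [ae_restrict_mem measurableSet_Iic] with t ht
              exact hinner t ht
        _ = B * ∫ t in Set.Iic (x₀ ^ α), (1 + |t|) ^ (-(2:ℝ)) := integral_const_mul _ _
        _ ≤ B * I2 := by
            apply mul_le_mul_of_nonneg_left _ hB0
            exact setIntegral_le_integral hI2' (by filter_upwards with t; positivity)
    refine houter.trans ?_
    have hnx : ‖x₀ ^ (-1:ℝ)‖ = x₀⁻¹ := by
      rw [Real.norm_eq_abs, abs_of_pos (Real.rpow_pos_of_pos hx0 _), Real.rpow_neg_one]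
    rw [hnx, hBdef]
    apply le_of_eq
    ring
  have hδ' : (-1:ℝ) < δ - 1/2 := by linarith
  exact hbigO.trans_isLittleO (aux_littleO hδ')
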